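/- Let n ≥ 1, h > 0, L = 2nh, and consider the uniform one-dimensional grid x̃_j = 2jh for j = 0, …, n with inverse-square weight w(x̃_i, x̃_j) = 1/(x̃_j − x̃_i)². For the quadratic function u(x) = α₀ + α₁ x + α₂ x², the non-local first derivative δu/δx(x̃_i) = (1/n) ∑_{j ≠ i} (u(x̃_j) − u(x̃_i)) (x̃_j − x̃_i) w(x̃_i, x̃_j) satisfies the exact identity δu/δx(x̃_i) = u′(x̃_i) + α₂ · ((n+1)/n) · (L/2 − x̃_i) for every i = 0, …, n, where u′(x̃_i) = α₁ + 2α₂ x̃_i is the ordinary derivative. -/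

import Mathlib

/-- On the uniform grid `x̃_j = 2jh`, `j = 0,…,n`, with inverse-square weight,
the non-local first derivative of the quadratic `u(x) = α₀ + α₁x + α₂x²` satisfies
`δu/δx(x̃_i) = u′(x̃_i) + α₂ ((n+1)/n) (L/2 − x̃_i)` where `L = 2nh`. -/
theorem nonlocal_derivative_quadratic_error
    (n : ℕ) (hn : 1 ≤ n) (h : ℝ) (hh : 0 < h) (L : ℝ) (hL : L = 2 * n * h)
    (α₀ α₁ α₂ : ℝ) (u : ℝ → ℝ) (hu : ∀ x, u x = α₀ + α₁ * x + α₂ * x ^ 2) :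
    ∀ i ∈ Finset.range (n + 1),
      (1 / (n : ℝ)) *
        ∑ j ∈ (Finset.range (n + 1)).erase i,
          (u (2 * j * h) - u (2 * i * h)) * (2 * j * h - 2 * i * h) *
            (1 / (2 * j * h - 2 * i * h) ^ 2) =
      (α₁ + 2 * α₂ * (2 * i * h)) + α₂ * (((n : ℝ) + 1) / n) * (L / 2 - 2 * i * h) := by
  intro i hi
  have hn0 : (n : ℝ) ≠ 0 := Nat.cast_ne_zero.mpr (by omega)
  have key : ∀ j ∈ (Finset.range (n + 1)).erase i,
      (u (2 * j * h) - u (2 * i * h)) * (2 * j * h - 2 * i * h) *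
        (1 / (2 * j * h - 2 * i * h) ^ 2)
      = (α₁ + α₂ * 2 * i * h) + (α₂ * 2 * h) * j := by
    intro j hj
    have hji : j ≠ i := Finset.ne_of_mem_erase hj
    have hd : (2 * (j : ℝ) * h - 2 * i * h) ≠ 0 := by
      have h1 : (j : ℝ) ≠ i := by exact_mod_cast hji
      have h2 : (j : ℝ) - i ≠ 0 := sub_ne_zero.mpr h1
      have hne : 2 * h * ((j : ℝ) - i) ≠ 0 := by positivity
      intro hc; apply hne; linarith [hc]
    rw [hu, hu]
    have hji' : (j : ℝ) - i ≠ 0 := sub_ne_zero.mpr (by exact_mod_cast hji)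
    field_simp
    ring
  rw [Finset.sum_congr rfl key]
  have hsum : ∑ j ∈ (Finset.range (n + 1)).erase i,
      ((α₁ + α₂ * 2 * i * h) + (α₂ * 2 * h) * (j : ℝ))
      = (∑ j ∈ Finset.range (n + 1), ((α₁ + α₂ * 2 * i * h) + (α₂ * 2 * h) * (j : ℝ)))
        - ((α₁ + α₂ * 2 * i * h) + (α₂ * 2 * h) * (i : ℝ)) :=
    Finset.sum_erase_eq_sub hi
  rw [hsum]
  have hgauss : ∑ j ∈ Finset.range (n + 1), (j : ℝ) = n * (n + 1) / 2 := by
    have hnat : (∑ j ∈ Finset.range (n + 1), j) * 2 = n * (n + 1) := by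
      rw [Finset.sum_range_id_mul_two]; simp [Nat.mul_comm]
    have h2 := congrArg (Nat.cast : ℕ → ℝ) hnat
    push_cast at h2
    linarith
  rw [Finset.sum_add_distrib, Finset.sum_const, Finset.card_range, ← Finset.mul_sum,
    hgauss, hL]
  field_simp
  ring
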